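/- The function F(ρ,m,M,Q) := p(ρ) + (2/d)e_kin(ρ,m,M) − Q is convex on ℝ⁺ × ℝ^d × S₀^d × ℝ, vanishes on the constitutive set K, and consequently F ≤ 0 on the convex hull of K; hence the Λ-convex hull K^Λ is contained in {F ≤ 0}. -/

import Mathlib

open Matrix

noncomputable def lamMax {d : ℕ} (M : Matrix (Fin d) (Fin d) ℝ) : ℝ :=
  sSup {r : ℝ | ∃ v : Fin d → ℝ, v ⬝ᵥ v = 1 ∧ v ⬝ᵥ M.mulVec v = r}

noncomputable def eKin {d : ℕ} (ρ : ℝ) (m : Fin d → ℝ) (M : Matrix (Fin d) (Fin d) ℝ) : ℝ :=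
  ((d : ℝ) / 2) * lamMax (ρ⁻¹ • vecMulVec m m - M)

noncomputable def circProd {d : ℕ} (m : Fin d → ℝ) : Matrix (Fin d) (Fin d) ℝ :=
  vecMulVec m m - ((1 / (d : ℝ)) * (m ⬝ᵥ m)) • (1 : Matrix (Fin d) (Fin d) ℝ)

abbrev StateSpace (d : ℕ) := ℝ × (Fin d → ℝ) × Matrix (Fin d) (Fin d) ℝ × ℝ

noncomputable def Kset (d : ℕ) (p : ℝ → ℝ) : Set (StateSpace d) :=
  {z | 0 < z.1 ∧ z.2.2.1 = z.1⁻¹ • circProd z.2.1 ∧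
    z.2.2.2 = p z.1 + (z.2.1 ⬝ᵥ z.2.1) / (z.1 * d)}

noncomputable def waveCone (d : ℕ) : Set (StateSpace d) :=
  {z | z ≠ 0 ∧
    (Matrix.fromBlocks
        (z.2.2.1 + z.2.2.2 • (1 : Matrix (Fin d) (Fin d) ℝ)) (Matrix.replicateCol (Fin 1) z.2.1)
        (Matrix.replicateRow (Fin 1) z.2.1) (Matrix.of fun _ _ => z.1)).det = 0}

def lamHull {V : Type*} [AddCommGroup V] [Module ℝ V] (K L : Set V) : Set V :=
  ⋂₀ {S | K ⊆ S ∧ ∀ z₁ ∈ S, ∀ z₂ ∈ S, z₁ - z₂ ∈ L →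
      ∀ t ∈ Set.Icc (0 : ℝ) 1, t • z₁ + (1 - t) • z₂ ∈ S}

-- unit vector exists
lemma exists_unit {d : ℕ} (hd : 0 < d) : ∃ v : Fin d → ℝ, v ⬝ᵥ v = 1 := by
  refine ⟨Pi.single ⟨0, hd⟩ 1, ?_⟩
  simp [dotProduct, Pi.single_apply]

lemma quadSet_nonempty {d : ℕ} (hd : 0 < d) (A : Matrix (Fin d) (Fin d) ℝ) :
    {r : ℝ | ∃ v : Fin d → ℝ, v ⬝ᵥ v = 1 ∧ v ⬝ᵥ A.mulVec v = r}.Nonempty := by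
  obtain ⟨v, hv⟩ := exists_unit hd
  exact ⟨_, v, hv, rfl⟩

lemma quadSet_bdd {d : ℕ} (A : Matrix (Fin d) (Fin d) ℝ) :
    BddAbove {r : ℝ | ∃ v : Fin d → ℝ, v ⬝ᵥ v = 1 ∧ v ⬝ᵥ A.mulVec v = r} := by
  refine ⟨∑ i, ∑ j, |A i j|, ?_⟩
  rintro r ⟨v, hv, rfl⟩
  have habs : ∀ i, |v i| ≤ 1 := by
    intro i
    rw [← sq_le_one_iff_abs_le_one]
    have hsum : ∑ j, v j * v j = 1 := by simpa [dotProduct] using hv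
    have := Finset.single_le_sum (f := fun j => v j * v j)
      (fun j _ => mul_self_nonneg _) (Finset.mem_univ i)
    rw [hsum] at this
    have h3 : v i * v i ≤ 1 := this
    nlinarith
  calc v ⬝ᵥ A.mulVec v = ∑ i, ∑ j, v i * (A i j * v j) := by
        simp [dotProduct, mulVec, Finset.mul_sum]
    _ ≤ ∑ i, ∑ j, |A i j| := by
        refine Finset.sum_le_sum fun i _ => Finset.sum_le_sum fun j _ => ?_
        calc v i * (A i j * v j) ≤ |v i * (A i j * v j)| := le_abs_self _
          _ = |v i| * |A i j| * |v j| := by rw [abs_mul, abs_mul]; ring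
          _ ≤ 1 * |A i j| * 1 := by
              gcongr
              · exact habs i
              · exact habs j
          _ = |A i j| := by ring

lemma quad_eval {d : ℕ} (ρ : ℝ) (m : Fin d → ℝ) (M : Matrix (Fin d) (Fin d) ℝ)
    (v : Fin d → ℝ) :
    v ⬝ᵥ (ρ⁻¹ • vecMulVec m m - M).mulVec v = ρ⁻¹ * (m ⬝ᵥ v) ^ 2 - v ⬝ᵥ M.mulVec v := by
  rw [sub_mulVec, dotProduct_sub, smul_mulVec, dotProduct_smul]
  congr 1
  have : (vecMulVec m m).mulVec v = fun i => m i * (m ⬝ᵥ v) := by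
    ext i; simp [mulVec, vecMulVec_apply, dotProduct, Finset.mul_sum, mul_assoc]
  rw [this]
  have h2 : v ⬝ᵥ (fun i => m i * (m ⬝ᵥ v)) = (m ⬝ᵥ v) ^ 2 := by
    simp only [dotProduct, sq, Finset.sum_mul]
    exact Finset.sum_congr rfl fun i _ => by ring
  rw [h2, smul_eq_mul]

lemma lamMax_smul_one {d : ℕ} (hd : 0 < d) (c : ℝ) :
    lamMax (c • (1 : Matrix (Fin d) (Fin d) ℝ)) = c := by
  have : {r : ℝ | ∃ v : Fin d → ℝ, v ⬝ᵥ v = 1 ∧ v ⬝ᵥ (c • (1 : Matrix (Fin d) (Fin d) ℝ)).mulVec v = r} = {c} := by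
    ext r
    constructor
    · rintro ⟨v, hv, rfl⟩
      simp [smul_mulVec, one_mulVec, dotProduct_smul, hv]
    · rintro rfl
      obtain ⟨v, hv⟩ := exists_unit hd
      exact ⟨v, hv, by simp [smul_mulVec, one_mulVec, dotProduct_smul, hv]⟩
  rw [lamMax, this, csSup_singleton]

lemma combo_pos {t s ρ₁ ρ₂ : ℝ} (ht : 0 ≤ t) (hs : 0 ≤ s) (hts : t + s = 1)
    (h1 : 0 < ρ₁) (h2 : 0 < ρ₂) : 0 < t * ρ₁ + s * ρ₂ := by
  rcases lt_or_ge t 1 with h | h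
  · have hs' : 0 < s := by linarith
    nlinarith [mul_nonneg ht h1.le, mul_pos hs' h2]
  · nlinarith [mul_pos (lt_of_lt_of_le one_pos h) h1, mul_nonneg hs h2.le]

lemma qol {a b t s ρ₁ ρ₂ : ℝ} (ht : 0 ≤ t) (hs : 0 ≤ s) (hts : t + s = 1)
    (h1 : 0 < ρ₁) (h2 : 0 < ρ₂) :
    (t * ρ₁ + s * ρ₂)⁻¹ * (t * a + s * b) ^ 2 ≤ t * (ρ₁⁻¹ * a ^ 2) + s * (ρ₂⁻¹ * b ^ 2) := by
  have hρ : 0 < t * ρ₁ + s * ρ₂ := combo_pos ht hs hts h1 h2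
  have expand : t * (ρ₁⁻¹ * a ^ 2) + s * (ρ₂⁻¹ * b ^ 2)
      = (t * (a ^ 2 * ρ₂) + s * (b ^ 2 * ρ₁)) / (ρ₁ * ρ₂) := by
    field_simp
  rw [expand, inv_mul_le_iff₀ hρ, mul_div_assoc', le_div_iff₀ (by positivity)]
  nlinarith [mul_nonneg (mul_nonneg ht hs) (sq_nonneg (a * ρ₂ - b * ρ₁))]

lemma lamMax_combo {d : ℕ} (hd : 0 < d) {ρ₁ ρ₂ : ℝ} (h1 : 0 < ρ₁) (h2 : 0 < ρ₂)
    (m₁ m₂ : Fin d → ℝ) (M₁ M₂ : Matrix (Fin d) (Fin d) ℝ) {t s : ℝ}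
    (ht : 0 ≤ t) (hs : 0 ≤ s) (hts : t + s = 1) :
    lamMax ((t * ρ₁ + s * ρ₂)⁻¹ • vecMulVec (t • m₁ + s • m₂) (t • m₁ + s • m₂)
        - (t • M₁ + s • M₂)) ≤
      t * lamMax (ρ₁⁻¹ • vecMulVec m₁ m₁ - M₁) + s * lamMax (ρ₂⁻¹ • vecMulVec m₂ m₂ - M₂) := by
  apply csSup_le (quadSet_nonempty hd _)
  rintro r ⟨v, hv, rfl⟩
  rw [quad_eval]
  have e1 : ρ₁⁻¹ * (m₁ ⬝ᵥ v) ^ 2 - v ⬝ᵥ M₁.mulVec v ≤ lamMax (ρ₁⁻¹ • vecMulVec m₁ m₁ - M₁) :=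
    le_csSup (quadSet_bdd _) ⟨v, hv, quad_eval _ _ _ _⟩
  have e2 : ρ₂⁻¹ * (m₂ ⬝ᵥ v) ^ 2 - v ⬝ᵥ M₂.mulVec v ≤ lamMax (ρ₂⁻¹ • vecMulVec m₂ m₂ - M₂) :=
    le_csSup (quadSet_bdd _) ⟨v, hv, quad_eval _ _ _ _⟩
  have hm : (t • m₁ + s • m₂) ⬝ᵥ v = t * (m₁ ⬝ᵥ v) + s * (m₂ ⬝ᵥ v) := by
    rw [add_dotProduct, smul_dotProduct, smul_dotProduct, smul_eq_mul, smul_eq_mul]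
  have hM : v ⬝ᵥ (t • M₁ + s • M₂).mulVec v
      = t * (v ⬝ᵥ M₁.mulVec v) + s * (v ⬝ᵥ M₂.mulVec v) := by
    rw [add_mulVec, smul_mulVec, smul_mulVec, dotProduct_add,
      dotProduct_smul, dotProduct_smul, smul_eq_mul, smul_eq_mul]
  rw [hm, hM]
  have key := qol (a := m₁ ⬝ᵥ v) (b := m₂ ⬝ᵥ v) ht hs hts h1 h2
  nlinarith [mul_le_mul_of_nonneg_left e1 ht, mul_le_mul_of_nonneg_left e2 hs]

lemma vecMulVec_transpose' {d : ℕ} (m : Fin d → ℝ) :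
    (vecMulVec m m)ᵀ = vecMulVec m m := by
  ext i j; simp [vecMulVec_apply, transpose_apply, mul_comm]

lemma circProd_isSymm {d : ℕ} (m : Fin d → ℝ) : (circProd m).IsSymm := by
  show (circProd m)ᵀ = circProd m
  unfold circProd
  rw [transpose_sub, transpose_smul, transpose_one, vecMulVec_transpose']

lemma circProd_trace {d : ℕ} (hd : (d : ℝ) ≠ 0) (m : Fin d → ℝ) :
    (circProd m).trace = 0 := by
  unfold circProd
  rw [trace_sub, trace_smul, trace_one]
  have h1 : (vecMulVec m m).trace = m ⬝ᵥ m := by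
    simp [Matrix.trace, Matrix.diag, vecMulVec_apply, dotProduct]
  rw [h1, smul_eq_mul, Fintype.card_fin]
  field_simp
  ring


/-- The function F(ρ,m,M,Q) := p(ρ) + (2/d)e_kin(ρ,m,M) − Q. -/
noncomputable def Ffun (d : ℕ) (p : ℝ → ℝ) (z : StateSpace d) : ℝ :=
  p z.1 + (2 / (d : ℝ)) * eKin z.1 z.2.1 z.2.2.1 - z.2.2.2

/-- F is convex on ℝ⁺ × ℝ^d × S₀^d × ℝ, vanishes on K, hence
F ≤ 0 on the convex hull of K, and K^Λ ⊆ {F ≤ 0}. -/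
theorem Ffun_convex_and_hull_bound {d : ℕ} (hd : 2 ≤ d) (p : ℝ → ℝ)
    (hp : ConvexOn ℝ (Set.Ioi 0) p) :
    ConvexOn ℝ
      {z : StateSpace d | 0 < z.1 ∧ z.2.2.1.IsSymm ∧ z.2.2.1.trace = 0}
      (Ffun d p) ∧
    (∀ z ∈ Kset d p, Ffun d p z = 0) ∧
    (∀ z ∈ convexHull ℝ (Kset d p), Ffun d p z ≤ 0) ∧
    lamHull (Kset d p) (waveCone d) ⊆ {z | Ffun d p z ≤ 0} := by
  have hd0 : 0 < d := lt_of_lt_of_le two_pos hd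
  have hdr : (d : ℝ) ≠ 0 := Nat.cast_ne_zero.mpr hd0.ne'
  have hF : ∀ z : StateSpace d, Ffun d p z
      = p z.1 + lamMax (z.1⁻¹ • vecMulVec z.2.1 z.2.1 - z.2.2.1) - z.2.2.2 := by
    intro z
    unfold Ffun eKin
    have : (2 / (d : ℝ)) * ((d : ℝ) / 2 * lamMax (z.1⁻¹ • vecMulVec z.2.1 z.2.1 - z.2.2.1))
        = lamMax (z.1⁻¹ • vecMulVec z.2.1 z.2.1 - z.2.2.1) := by
      field_simp
    rw [this]
  have hSconv : Convex ℝ {z : StateSpace d | 0 < z.1 ∧ z.2.2.1.IsSymm ∧ z.2.2.1.trace = 0} := by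
    intro z₁ h₁ z₂ h₂ t s ht hs hts
    refine ⟨?_, ?_, ?_⟩
    · exact combo_pos ht hs hts h₁.1 h₂.1
    · show ((t • z₁ + s • z₂).2.2.1)ᵀ = (t • z₁ + s • z₂).2.2.1
      show (t • z₁.2.2.1 + s • z₂.2.2.1)ᵀ = t • z₁.2.2.1 + s • z₂.2.2.1
      rw [transpose_add, transpose_smul, transpose_smul, h₁.2.1, h₂.2.1]
    · show (t • z₁.2.2.1 + s • z₂.2.2.1).trace = 0
      rw [trace_add, trace_smul, trace_smul, h₁.2.2, h₂.2.2, smul_zero, smul_zero, add_zero]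
  have hKS : Kset d p ⊆ {z : StateSpace d | 0 < z.1 ∧ z.2.2.1.IsSymm ∧ z.2.2.1.trace = 0} := by
    rintro z ⟨hρ, hM, _⟩
    refine ⟨hρ, ?_, ?_⟩
    · rw [hM]
      show (z.1⁻¹ • circProd z.2.1)ᵀ = z.1⁻¹ • circProd z.2.1
      rw [transpose_smul, circProd_isSymm]
    · rw [hM, trace_smul, circProd_trace hdr, smul_zero]
  have hvanish : ∀ z ∈ Kset d p, Ffun d p z = 0 := by
    rintro z ⟨hρ, hM, hQ⟩
    rw [hF]
    have hA : z.1⁻¹ • vecMulVec z.2.1 z.2.1 - z.2.2.1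
        = (z.1⁻¹ * ((1 / (d : ℝ)) * (z.2.1 ⬝ᵥ z.2.1))) • (1 : Matrix (Fin d) (Fin d) ℝ) := by
      rw [hM]
      unfold circProd
      rw [smul_sub, smul_smul, sub_sub_cancel]
    rw [hA, lamMax_smul_one hd0, hQ]
    field_simp
    ring
  have hconv : ConvexOn ℝ
      {z : StateSpace d | 0 < z.1 ∧ z.2.2.1.IsSymm ∧ z.2.2.1.trace = 0} (Ffun d p) := by
    refine ⟨hSconv, ?_⟩
    intro z₁ h₁ z₂ h₂ t s ht hs hts
    rw [hF, hF, hF]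
    have c1 : (t • z₁ + s • z₂).1 = t * z₁.1 + s * z₂.1 := rfl
    have c2 : (t • z₁ + s • z₂).2.1 = t • z₁.2.1 + s • z₂.2.1 := rfl
    have c3 : (t • z₁ + s • z₂).2.2.1 = t • z₁.2.2.1 + s • z₂.2.2.1 := rfl
    have c4 : (t • z₁ + s • z₂).2.2.2 = t * z₁.2.2.2 + s * z₂.2.2.2 := rfl
    rw [c1, c2, c3, c4]
    have hp' : p (t * z₁.1 + s * z₂.1) ≤ t * p z₁.1 + s * p z₂.1 := by
      have := hp.2 (Set.mem_Ioi.mpr h₁.1) (Set.mem_Ioi.mpr h₂.1) ht hs hts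
      simpa [smul_eq_mul] using this
    have hlam := lamMax_combo hd0 h₁.1 h₂.1 z₁.2.1 z₂.2.1 z₁.2.2.1 z₂.2.2.1 ht hs hts
    simp only [smul_eq_mul]
    nlinarith [hp', hlam]
  have hhullbd : ∀ z ∈ convexHull ℝ (Kset d p), Ffun d p z ≤ 0 := by
    intro z hz
    obtain ⟨y, hy, hle⟩ := hconv.exists_ge_of_mem_convexHull hKS hz
    rw [hvanish y hy] at hle
    exact hle
  refine ⟨hconv, hvanish, hhullbd, ?_⟩
  intro z hz
  have hmem : z ∈ convexHull ℝ (Kset d p) := by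
    apply hz
    refine ⟨subset_convexHull ℝ _, ?_⟩
    intro z₁ h₁ z₂ h₂ _ t ht
    exact (convex_convexHull ℝ _) h₁ h₂ ht.1 (by linarith [ht.2]) (by ring)
  exact hhullbd z hmem
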